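/- For every integer t ≥ 3, the polynomial t·x² is a Hilbert polynomial. -/

import Mathlib

open Polynomial

/-- A polynomial `f ∈ ℚ[x]` is a *Hilbert polynomial* if there exist a field `k`,
a standard graded `k`-algebra `R` (a commutative `ℕ`-graded `k`-algebra with
finite-dimensional graded pieces, generated as a `k`-algebra by its degree-one part)
and an `N₀` such that `dim_k R_i = f(i)` for all `i ≥ N₀`. -/
def IsHilbertPolynomial (f : Polynomial ℚ) : Prop :=
  ∃ (k : Type) (R : Type) (_ : Field k) (_ : CommRing R) (_ : Algebra k R)
    (𝒜 : ℕ → Submodule k R) (_ : GradedAlgebra 𝒜),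
    (∀ i : ℕ, FiniteDimensional k (𝒜 i)) ∧
    Algebra.adjoin k ((𝒜 1 : Submodule k R) : Set R) = ⊤ ∧
    ∃ N₀ : ℕ, ∀ i : ℕ, N₀ ≤ i → (Module.finrank k (𝒜 i) : ℚ) = f.eval (i : ℚ)


namespace SignPat
open Finset


/-- exponent vectors: coords 0=x 1=y 2=z 3=u 4=w 5=τ 6=ζ -/
abbrev A : Type := Fin 7 → ℕ

def degA (a : A) : ℕ := ∑ j, a j

variable (T : ℕ)

def Bp : ℕ := 2*T*T - 4*T
def Vp : ℕ := (Bp T).choose 2 - (2*T-1).choose 3 - 2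

def P1 (a : A) : Prop := a 3 ≤ 2*T-1 ∧ a 4 = 0 ∧ a 5 = 0 ∧ a 6 = 0
def P2 (a : A) : Prop := a 2 = 0 ∧ a 3 = 0 ∧ 1 ≤ a 4 ∧ a 4 ≤ Bp T ∧ a 5 = 0 ∧ a 6 = 0
def P3 (a : A) : Prop := a 1 = 0 ∧ a 2 = 0 ∧ a 3 = 0 ∧ a 4 = 0 ∧ 1 ≤ a 5 ∧ a 5 ≤ Vp T ∧ a 6 = 0

def inS (a : A) : Prop := P1 T a ∨ P2 T a ∨ P3 T a

instance : DecidablePred (inS T) := fun a => by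
  unfold inS P1 P2 P3; infer_instance

lemma inS_down {a b : A} (h : inS T (a + b)) : inS T a := by
  rcases h with ⟨h3, h4, h5, h6⟩ | ⟨h2, h3, h4, h4', h5, h6⟩ | ⟨h1, h2, h3, h4, h5, h5', h6⟩
  · exact Or.inl ⟨by have := h3; simp only [Pi.add_apply] at *; omega,
      by simp only [Pi.add_apply] at h4; omega,
      by simp only [Pi.add_apply] at h5; omega,
      by simp only [Pi.add_apply] at h6; omega⟩
  · simp only [Pi.add_apply] at h2 h3 h4 h4' h5 h6
    rcases Nat.eq_zero_or_pos (a 4) with hz | hp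
    · exact Or.inl ⟨by omega, by omega, by omega, by omega⟩
    · exact Or.inr (Or.inl ⟨by omega, by omega, by omega, by omega, by omega, by omega⟩)
  · simp only [Pi.add_apply] at h1 h2 h3 h4 h5 h5' h6
    rcases Nat.eq_zero_or_pos (a 5) with hz | hp
    · exact Or.inl ⟨by omega, by omega, by omega, by omega⟩
    · exact Or.inr (Or.inr ⟨by omega, by omega, by omega, by omega, by omega, by omega, by omega⟩)

/-- the absorber vector ζ^n -/
def zv (n : ℕ) : A := fun j => if j = 6 then n else 0

@[simp] lemma degA_zv (n : ℕ) : degA (zv n) = n := by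
  simp [degA, zv, Fin.sum_univ_seven]

lemma zv_not_inS {n : ℕ} (hn : 0 < n) : ¬ inS T (zv n) := by
  rintro (⟨_, _, _, h6⟩ | ⟨_, _, _, _, _, h6⟩ | ⟨_, _, _, _, _, _, h6⟩) <;>
    simp [zv] at h6 <;> omega

lemma degA_add (a b : A) : degA (a + b) = degA a + degA b := by
  simp [degA, Finset.sum_add_distrib]

lemma degA_eq_zero {a : A} (h : degA a = 0) : a = 0 := by
  funext j
  have := Finset.sum_eq_zero_iff.mp h j (Finset.mem_univ j)
  simpa using this

def kap (a : A) : A := if inS T a then a else zv (degA a)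

lemma degA_kap (a : A) : degA (kap T a) = degA a := by
  unfold kap; split <;> simp

lemma zero_inS : inS T 0 := Or.inl ⟨by simp, rfl, rfl, rfl⟩

lemma not_inS_ne_zero {a : A} (h : ¬ inS T a) : 0 < degA a := by
  rcases Nat.eq_zero_or_pos (degA a) with h0 | h0
  · exact absurd (by rw [degA_eq_zero h0]; exact zero_inS T) h
  · exact h0

lemma kap_idem (a : A) : kap T (kap T a) = kap T a := by
  by_cases h : inS T a
  · simp [kap, h]
  · have hd : 0 < degA a := not_inS_ne_zero T h
    simp [kap, h, if_neg (zv_not_inS T hd)]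

lemma zv_add (m n : ℕ) : zv m + zv n = zv (m + n) := by
  funext j; simp [zv]; split <;> simp

lemma add_zv_not_inS (a : A) {n : ℕ} (hn : 0 < n) : ¬ inS T (a + zv n) := by
  rintro (⟨_, _, _, h6⟩ | ⟨_, _, _, _, _, h6⟩ | ⟨_, _, _, _, _, _, h6⟩) <;>
    simp [zv] at h6 <;> omega

lemma not_inS_add_left {a b : A} (h : ¬ inS T b) : ¬ inS T (a + b) := by
  intro hab
  exact h (inS_down T (by rwa [add_comm] at hab))

lemma kap_add (a b : A) : kap T (a + b) = kap T (kap T a + kap T b) := by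
  by_cases ha : inS T a <;> by_cases hb : inS T b
  · simp [kap, ha, hb]
  · have h1 : ¬ inS T (a + b) := not_inS_add_left T hb
    have h2 : ¬ inS T (a + zv (degA b)) := add_zv_not_inS T a (not_inS_ne_zero T hb)
    simp only [kap, if_pos ha, if_neg hb, if_neg h1, if_neg h2, degA_add, degA_zv]
  · have h1 : ¬ inS T (a + b) := by
      intro hab; exact ha (inS_down T hab)
    have h2 : ¬ inS T (zv (degA a) + b) := by
      rw [add_comm]; exact add_zv_not_inS T b (not_inS_ne_zero T ha)
    simp only [kap, if_pos hb, if_neg ha, if_neg h1, if_neg h2, degA_add, degA_zv]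
  · have h1 : ¬ inS T (a + b) := not_inS_add_left T hb
    have hda := not_inS_ne_zero T ha
    have h2 : ¬ inS T (zv (degA a) + zv (degA b)) := by
      rw [zv_add]; exact zv_not_inS T (by omega)
    simp only [kap, if_neg ha, if_neg hb, if_neg h1, if_neg h2, degA_add, degA_zv, zv_add]
    rw [if_neg (zv_not_inS T (by omega))]

/-- the congruence -/
def con : AddCon A where
  r a b := kap T a = kap T b
  iseqv := ⟨fun _ => rfl, Eq.symm, Eq.trans⟩
  add' {a b c d} h1 h2 := by
    show kap T (a + c) = kap T (b + d)
    rw [kap_add, h1, h2, ← kap_add]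

/-- the monoid -/
abbrev M : Type := (con T).Quotient

def degAhom : A →+ ℕ where
  toFun := degA
  map_zero' := by simp [degA]
  map_add' := degA_add

def degM : M T →+ ℕ :=
  AddCon.lift (con T) (degAhom) (by
    intro a b h
    show degA a = degA b
    have : degA (kap T a) = degA (kap T b) := by rw [h]
    rwa [degA_kap, degA_kap] at this)



/-- sum of first n+1 positive integers -/
lemma sum_range_succ_choose (n : ℕ) : ∑ k ∈ range (n+1), (k+1) = (n+2).choose 2 := by
  induction n with
  | zero => simp
  | succ n ih =>
    rw [Finset.sum_range_succ, ih]
    have : (n+3).choose 2 = (n+2).choose 1 + (n+2).choose 2 := Nat.choose_succ_succ _ _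
    simp [this, Nat.choose_one_right]
    omega

/-- triples with given sum -/
def Tri (d : ℕ) : Finset (ℕ × ℕ × ℕ) :=
  (Finset.HasAntidiagonal.antidiagonal d).biUnion fun p =>
    (Finset.HasAntidiagonal.antidiagonal p.1).image fun q => (q.1, q.2, p.2)

lemma mem_Tri {d : ℕ} {v : ℕ × ℕ × ℕ} : v ∈ Tri d ↔ v.1 + v.2.1 + v.2.2 = d := by
  constructor
  · intro h
    simp only [Tri, mem_biUnion, mem_image, Finset.HasAntidiagonal.mem_antidiagonal] at h
    obtain ⟨p, hp, q, hq, rfl⟩ := h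
    simp; omega
  · intro h
    simp only [Tri, mem_biUnion, mem_image, Finset.HasAntidiagonal.mem_antidiagonal]
    exact ⟨(v.1 + v.2.1, v.2.2), by omega, (v.1, v.2.1), rfl, rfl⟩

lemma card_Tri (d : ℕ) : (Tri d).card = (d+2).choose 2 := by
  rw [Tri, Finset.card_biUnion]
  · have h1 : ∀ p ∈ Finset.HasAntidiagonal.antidiagonal d,
        ((Finset.HasAntidiagonal.antidiagonal p.1).image fun q => (q.1, q.2, p.2)).card = p.1 + 1 := by
      intro p _
      rw [Finset.card_image_of_injective _ (fun q q' h => by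
        simpa [Prod.ext_iff] using h), Finset.Nat.card_antidiagonal]
    rw [Finset.sum_congr rfl h1, Finset.Nat.sum_antidiagonal_eq_sum_range_succ_mk]
    simpa using sum_range_succ_choose d
  · rintro p hp p' hp' hne
    simp only [Finset.disjoint_left, mem_image, Finset.mem_coe, Finset.HasAntidiagonal.mem_antidiagonal] at *
    rintro x ⟨q, hq, rfl⟩ ⟨q', hq', hx⟩
    apply hne
    have h3 : p'.2 = p.2 := by
      have := hx
      simp [Prod.ext_iff] at this
      exact this.2.2
    have : p.2 = p'.2 := h3.symm
    ext
    · omega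
    · exact this

/-- telescoped sum of triangle numbers -/
lemma sum_tri_telescope (i : ℕ) : ∀ n, n ≤ i →
    (∑ u ∈ range n, (i - u + 2).choose 2) + (i + 3 - n).choose 3 = (i+3).choose 3 := by
  intro n
  induction n with
  | zero => simp
  | succ n ih =>
    intro hn
    rw [Finset.sum_range_succ]
    have hs : i + 3 - n = (i - n + 2) + 1 := by omega
    have hP : (i - n + 2 + 1).choose 3 = (i - n + 2).choose 2 + (i - n + 2).choose 3 :=
      Nat.choose_succ_succ _ _
    have h2 : i + 3 - (n+1) = i - n + 2 := by omega
    rw [h2]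
    have := ih (by omega)
    rw [hs, hP] at this
    omega

/-- sum for the edge part -/
lemma sum_edge (i B : ℕ) (h : B ≤ i) :
    (∑ w ∈ Finset.Icc 1 B, (i + 1 - w)) + B.choose 2 = B * i := by
  induction B with
  | zero => simp
  | succ n ih =>
    rw [Finset.sum_Icc_succ_top (by omega)]
    have hP : (n+1).choose 2 = n.choose 1 + n.choose 2 := Nat.choose_succ_succ _ _
    have := ih (by omega)
    have hm : (n+1) * i = n * i + i := by ring
    simp [hP, Nat.choose_one_right] at *
    omega



lemma two_choose2 (m : ℕ) : 2 * ((m+2).choose 2) = (m+1)*(m+2) := by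
  induction m with
  | zero => rfl
  | succ n ih =>
    have hP : (n+1+2).choose 2 = (n+2).choose 1 + (n+2).choose 2 := Nat.choose_succ_succ _ _
    have h1 : (n+1+1)*(n+1+2) = (n+1)*(n+2) + 2*(n+2) := by ring
    rw [hP, h1, Nat.choose_one_right]
    omega

lemma six_choose3 (m : ℕ) : 6 * ((m+3).choose 3) = (m+1)*(m+2)*(m+3) := by
  induction m with
  | zero => rfl
  | succ n ih =>
    have hP : (n+1+3).choose 3 = (n+3).choose 2 + (n+3).choose 3 := Nat.choose_succ_succ _ _
    have h2 : 2 * ((n+3).choose 2) = (n+2)*(n+3) := two_choose2 (n+1)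
    have h3 : (n+1+1)*(n+1+2)*(n+1+3) = (n+1)*(n+2)*((n+3)) + 3*((n+2)*(n+3)) := by ring
    have ih' : 6 * ((n+3).choose 3) = (n+1)*(n+2)*(n+3) := ih
    rw [hP, h3]
    omega


lemma hBp (s : ℕ) : Bp (s+3) = 2*s*s + 8*s + 6 := by
  unfold Bp
  apply Nat.sub_eq_of_eq_add
  ring

lemma choose2_Bp (s : ℕ) :
    2 * ((Bp (s+3)).choose 2) = (2*s*s+8*s+5) * (2*s*s+8*s+6) := by
  rw [hBp]
  have : 2*s*s+8*s+6 = (2*s*s+8*s+4) + 2 := by ring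
  rw [this, two_choose2]
  try ring

lemma choose3_2T (s : ℕ) :
    6 * ((2*(s+3)-1).choose 3) = (2*s+3)*(2*s+4)*(2*s+5) := by
  have : 2*(s+3)-1 = (2*s+2)+3 := by omega
  rw [this, six_choose3]
  try ring

lemma Vp_key (s : ℕ) :
    Vp (s+3) + ((2*(s+3)-1).choose 3 + 2) = (Bp (s+3)).choose 2 := by
  unfold Vp
  have hineq : (2*(s+3)-1).choose 3 + 2 ≤ (Bp (s+3)).choose 2 := by
    have h1 := choose2_Bp s
    have h2 := choose3_2T s
    nlinarith [sq_nonneg s, sq_nonneg (s*s)]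
  omega

/-- the main counting identity -/
lemma main_identity (T i : ℕ) (hT : 3 ≤ T) (hi : 2*T ≤ i) :
    (i+3).choose 3 + Bp T * i
      = T*i^2 + (i+3-2*T).choose 3 + (2*T-1).choose 3 + 1 := by
  obtain ⟨s, rfl⟩ : ∃ s, T = s + 3 := ⟨T - 3, by omega⟩
  obtain ⟨j, rfl⟩ : ∃ j, i = j + 2*(s+3) := ⟨i - 2*(s+3), by omega⟩
  have e1 : 6 * ((j + 2*(s+3) + 3).choose 3)
      = (j+2*s+7)*(j+2*s+8)*(j+2*s+9) := by
    have : j + 2*(s+3) + 3 = (j+2*s+6) + 3 := by ring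
    rw [this, six_choose3]; try ring
  have e2 : j + 2*(s+3) + 3 - 2*(s+3) = j + 3 := by omega
  have e3 : 6 * ((j+3).choose 3) = (j+1)*(j+2)*(j+3) := six_choose3 j
  have e4 := choose3_2T s
  have e5 := hBp s
  rw [e2, e5]
  -- multiply the goal by 6
  have goal6 : 6 * ((j + 2*(s+3) + 3).choose 3) + 6 * ((2*s*s+8*s+6) * (j + 2*(s+3)))
      = 6 * ((s+3)*(j + 2*(s+3))^2) + 6 * ((j+3).choose 3)
        + 6 * ((2*(s+3)-1).choose 3) + 6 := by
    rw [e1, e3, e4]; ring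
  omega


section Count
variable (T : ℕ)

def mk1 (x y z u : ℕ) : A := ![x,y,z,u,0,0,0]
def mk2 (x y w : ℕ) : A := ![x,y,0,0,w,0,0]
def mk3 (x s : ℕ) : A := ![x,0,0,0,0,s,0]


@[simp] lemma mk1_a0 (x y z u : ℕ) : mk1 x y z u 0 = x := rfl
@[simp] lemma mk1_a1 (x y z u : ℕ) : mk1 x y z u 1 = y := rfl
@[simp] lemma mk1_a2 (x y z u : ℕ) : mk1 x y z u 2 = z := rfl
@[simp] lemma mk1_a3 (x y z u : ℕ) : mk1 x y z u 3 = u := rfl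
@[simp] lemma mk1_a4 (x y z u : ℕ) : mk1 x y z u 4 = 0 := rfl
@[simp] lemma mk1_a5 (x y z u : ℕ) : mk1 x y z u 5 = 0 := rfl
@[simp] lemma mk1_a6 (x y z u : ℕ) : mk1 x y z u 6 = 0 := rfl
@[simp] lemma mk2_a0 (x y w : ℕ) : mk2 x y w 0 = x := rfl
@[simp] lemma mk2_a1 (x y w : ℕ) : mk2 x y w 1 = y := rfl
@[simp] lemma mk2_a2 (x y w : ℕ) : mk2 x y w 2 = 0 := rfl
@[simp] lemma mk2_a3 (x y w : ℕ) : mk2 x y w 3 = 0 := rfl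
@[simp] lemma mk2_a4 (x y w : ℕ) : mk2 x y w 4 = w := rfl
@[simp] lemma mk2_a5 (x y w : ℕ) : mk2 x y w 5 = 0 := rfl
@[simp] lemma mk2_a6 (x y w : ℕ) : mk2 x y w 6 = 0 := rfl
@[simp] lemma mk3_a0 (x s : ℕ) : mk3 x s 0 = x := rfl
@[simp] lemma mk3_a1 (x s : ℕ) : mk3 x s 1 = 0 := rfl
@[simp] lemma mk3_a2 (x s : ℕ) : mk3 x s 2 = 0 := rfl
@[simp] lemma mk3_a3 (x s : ℕ) : mk3 x s 3 = 0 := rfl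
@[simp] lemma mk3_a4 (x s : ℕ) : mk3 x s 4 = 0 := rfl
@[simp] lemma mk3_a5 (x s : ℕ) : mk3 x s 5 = s := rfl
@[simp] lemma mk3_a6 (x s : ℕ) : mk3 x s 6 = 0 := rfl

lemma degA_mk1 (x y z u : ℕ) : degA (mk1 x y z u) = x+y+z+u := by
  simp [degA, Fin.sum_univ_seven]
lemma degA_mk2 (x y w : ℕ) : degA (mk2 x y w) = x+y+w := by
  simp [degA, Fin.sum_univ_seven]
lemma degA_mk3 (x s : ℕ) : degA (mk3 x s) = x+s := by
  simp [degA, Fin.sum_univ_seven]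

lemma eq_mk1 {a : A} (h4 : a 4 = 0) (h5 : a 5 = 0) (h6 : a 6 = 0) :
    a = mk1 (a 0) (a 1) (a 2) (a 3) := by
  funext j; fin_cases j <;> simp [h4, h5, h6]
lemma eq_mk2 {a : A} (h2 : a 2 = 0) (h3 : a 3 = 0) (h5 : a 5 = 0) (h6 : a 6 = 0) :
    a = mk2 (a 0) (a 1) (a 4) := by
  funext j; fin_cases j <;> simp [h2, h3, h5, h6]
lemma eq_mk3 {a : A} (h1 : a 1 = 0) (h2 : a 2 = 0) (h3 : a 3 = 0) (h4 : a 4 = 0)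
    (h6 : a 6 = 0) : a = mk3 (a 0) (a 5) := by
  funext j; fin_cases j <;> simp [h1, h2, h3, h4, h6]

def G1 (i : ℕ) : Finset A :=
  (range (2*T)).biUnion fun u => (Tri (i-u)).image fun v => mk1 v.1 v.2.1 v.2.2 u
def G2 (i : ℕ) : Finset A :=
  (Icc 1 (Bp T)).biUnion fun w => (Finset.HasAntidiagonal.antidiagonal (i-w)).image fun q => mk2 q.1 q.2 w
def G3 (i : ℕ) : Finset A :=
  (Icc 1 (Vp T)).image fun s => mk3 (i-s) s

lemma mem_G1 {i : ℕ} (hT : 3 ≤ T) (hi : 2*T ≤ i) {a : A} :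
    a ∈ G1 T i ↔ P1 T a ∧ degA a = i := by
  constructor
  · intro h
    simp only [G1, mem_biUnion, mem_image, mem_range] at h
    obtain ⟨u, hu, v, hv, rfl⟩ := h
    rw [mem_Tri] at hv
    constructor
    · refine ⟨?_, rfl, rfl, rfl⟩
      show u ≤ 2*T-1
      omega
    · rw [degA_mk1]; omega
  · rintro ⟨⟨h3, h4, h5, h6⟩, hd⟩
    simp only [G1, mem_biUnion, mem_image, mem_range]
    refine ⟨a 3, by omega, ⟨a 0, a 1, a 2⟩, ?_, ?_⟩
    · rw [mem_Tri]
      show a 0 + a 1 + a 2 = i - a 3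
      have : degA a = a 0 + a 1 + a 2 + a 3 + a 4 + a 5 + a 6 := by
        simp [degA, Fin.sum_univ_seven]
      omega
    · exact (eq_mk1 h4 h5 h6).symm

lemma mem_G2 {i : ℕ} (hi : Bp T ≤ i) {a : A} :
    a ∈ G2 T i ↔ P2 T a ∧ degA a = i := by
  constructor
  · intro h
    simp only [G2, mem_biUnion, mem_image, mem_Icc] at h
    obtain ⟨w, hw, q, hq, rfl⟩ := h
    rw [Finset.HasAntidiagonal.mem_antidiagonal] at hq
    refine ⟨⟨rfl, rfl, ?_, ?_, rfl, rfl⟩, by rw [degA_mk2]; omega⟩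
    · rw [mk2_a4]; omega
    · rw [mk2_a4]; omega
  · rintro ⟨⟨h2, h3, h4, h4', h5, h6⟩, hd⟩
    simp only [G2, mem_biUnion, mem_image, mem_Icc]
    refine ⟨a 4, ⟨h4, h4'⟩, ⟨a 0, a 1⟩, ?_, ?_⟩
    · rw [Finset.HasAntidiagonal.mem_antidiagonal]
      show a 0 + a 1 = i - a 4
      have : degA a = a 0 + a 1 + a 2 + a 3 + a 4 + a 5 + a 6 := by
        simp [degA, Fin.sum_univ_seven]
      omega
    · exact (eq_mk2 h2 h3 h5 h6).symm

lemma mem_G3 {i : ℕ} (hi : Vp T ≤ i) {a : A} :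
    a ∈ G3 T i ↔ P3 T a ∧ degA a = i := by
  constructor
  · intro h
    simp only [G3, mem_image, mem_Icc] at h
    obtain ⟨s, hs, rfl⟩ := h
    refine ⟨⟨rfl, rfl, rfl, rfl, ?_, ?_, rfl⟩, by rw [degA_mk3]; omega⟩
    · rw [mk3_a5]; omega
    · rw [mk3_a5]; omega
  · rintro ⟨⟨h1, h2, h3, h4, h5, h5', h6⟩, hd⟩
    simp only [G3, mem_image, mem_Icc]
    refine ⟨a 5, ⟨h5, h5'⟩, ?_⟩
    have hda : degA a = a 0 + a 1 + a 2 + a 3 + a 4 + a 5 + a 6 := by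
      simp [degA, Fin.sum_univ_seven]
    have hx : i - a 5 = a 0 := by omega
    rw [hx]
    exact (eq_mk3 h1 h2 h3 h4 h6).symm

lemma card_G1 {i : ℕ} (hT : 3 ≤ T) (hi : 2*T ≤ i) :
    (G1 T i).card + (i + 3 - 2*T).choose 3 = (i+3).choose 3 := by
  have hcard : (G1 T i).card = ∑ u ∈ range (2*T), (i - u + 2).choose 2 := by
    rw [G1, card_biUnion]
    · refine Finset.sum_congr rfl fun u _ => ?_
      rw [Finset.card_image_of_injective, card_Tri]
      intro v v' hvv
      have h0 : v.1 = v'.1 := congrFun hvv 0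
      have h1 : v.2.1 = v'.2.1 := congrFun hvv 1
      have h2 : v.2.2 = v'.2.2 := congrFun hvv 2
      exact Prod.ext h0 (Prod.ext h1 h2)
    · intro u hu u' hu' hne
      simp only [Finset.disjoint_left, mem_image]
      rintro x ⟨v, hv, rfl⟩ ⟨v', hv', hx⟩
      exact hne (congrFun hx 3).symm
  rw [hcard]
  exact sum_tri_telescope i (2*T) (by omega)

lemma card_G2 {i : ℕ} (hi : Bp T ≤ i) :
    (G2 T i).card + (Bp T).choose 2 = Bp T * i := by
  have hcard : (G2 T i).card = ∑ w ∈ Icc 1 (Bp T), (i + 1 - w) := by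
    rw [G2, card_biUnion]
    · refine Finset.sum_congr rfl fun w hw => ?_
      rw [Finset.card_image_of_injective, Finset.Nat.card_antidiagonal]
      · rw [mem_Icc] at hw; omega
      · intro q q' hq
        exact Prod.ext (congrFun hq 0) (congrFun hq 1)
    · intro w hw w' hw' hne
      simp only [Finset.disjoint_left, mem_image]
      rintro x ⟨q, hq, rfl⟩ ⟨q', hq', hx⟩
      exact hne (congrFun hx 4).symm
  rw [hcard]
  exact sum_edge i (Bp T) hi

lemma card_G3 {i : ℕ} (hi : Vp T ≤ i) : (G3 T i).card = Vp T := by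
  have hinj : Set.InjOn (fun s => mk3 (i-s) s) ↑(Icc 1 (Vp T)) := by
    intro s hs s' hs' hss
    have := congrFun hss 5
    simpa using this
  rw [G3, Finset.card_image_of_injOn hinj, Nat.card_Icc]
  omega

def N0 : ℕ := 2*T + Bp T + Vp T + 3

def SFin (i : ℕ) : Finset A := (G1 T i ∪ G2 T i) ∪ G3 T i

lemma mem_SFin {i : ℕ} (hT : 3 ≤ T) (hi : N0 T ≤ i) {a : A} :
    a ∈ SFin T i ↔ inS T a ∧ degA a = i := by
  have h1 : 2*T ≤ i := by unfold N0 at hi; omega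
  have h2 : Bp T ≤ i := by unfold N0 at hi; omega
  have h3 : Vp T ≤ i := by unfold N0 at hi; omega
  simp only [SFin, mem_union, mem_G1 T hT h1, mem_G2 T h2, mem_G3 T h3, inS]
  tauto

lemma card_SFin {i : ℕ} (hT : 3 ≤ T) (hi : N0 T ≤ i) :
    (SFin T i).card + 1 = T * i^2 := by
  have h1 : 2*T ≤ i := by unfold N0 at hi; omega
  have h2 : Bp T ≤ i := by unfold N0 at hi; omega
  have h3 : Vp T ≤ i := by unfold N0 at hi; omega
  have d12 : Disjoint (G1 T i) (G2 T i) := by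
    simp only [Finset.disjoint_left]
    intro a ha ha'
    have p1 := ((mem_G1 T hT h1).mp ha).1
    have p2 := ((mem_G2 T h2).mp ha').1
    obtain ⟨_, h4, _, _⟩ := p1
    obtain ⟨_, _, h4', _, _, _⟩ := p2
    omega
  have d123 : Disjoint (G1 T i ∪ G2 T i) (G3 T i) := by
    simp only [Finset.disjoint_left, mem_union]
    rintro a (ha | ha) ha'
    · have p1 := ((mem_G1 T hT h1).mp ha).1
      have p3 := ((mem_G3 T h3).mp ha').1
      obtain ⟨_, _, h5, _⟩ := p1
      obtain ⟨_, _, _, _, h5', _, _⟩ := p3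
      omega
    · have p2 := ((mem_G2 T h2).mp ha).1
      have p3 := ((mem_G3 T h3).mp ha').1
      obtain ⟨_, _, _, _, h5, _⟩ := p2
      obtain ⟨_, _, _, _, h5', _, _⟩ := p3
      omega
  have hc : (SFin T i).card = (G1 T i).card + (G2 T i).card + (G3 T i).card := by
    rw [SFin, Finset.card_union_of_disjoint d123, Finset.card_union_of_disjoint d12]
  obtain ⟨s, rfl⟩ : ∃ s, T = s + 3 := ⟨T - 3, by omega⟩
  have c1 := card_G1 (s+3) hT h1
  have c2 := card_G2 (s+3) h2
  have c3 := card_G3 (s+3) h3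
  have key := main_identity (s+3) i hT h1
  have vkey := Vp_key s
  omega

end Count

section Alg
open AddMonoidAlgebra

variable (T : ℕ)

noncomputable def kbar : M T → A := fun m => AddCon.liftOn m (kap T) (fun _ _ h => h)

@[simp] lemma kbar_coe (a : A) : kbar T (a : M T) = kap T a := rfl

lemma coe_kbar (m : M T) : ((kbar T m : A) : M T) = m := by
  induction m using AddCon.induction_on with
  | H a =>
    rw [kbar_coe]
    exact (AddCon.eq _).mpr (kap_idem T a)

@[simp] lemma degM_coe (a : A) : degM T (a : M T) = degA a := rfl

lemma degA_kbar (m : M T) : degA (kbar T m) = degM T m := by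
  induction m using AddCon.induction_on with
  | H a => rw [kbar_coe, degM_coe]; exact degA_kap T a

lemma degM_eq_zero {m : M T} (h : degM T m = 0) : m = 0 := by
  induction m using AddCon.induction_on with
  | H a =>
    have ha : degA a = 0 := h
    have : a = 0 := degA_eq_zero ha
    rw [this]
    rfl

/-- classification of the degree-`i` fiber of the monoid -/
noncomputable def fiberEquiv (i : ℕ) (hi : 1 ≤ i) :
    (⇑(degM T) ⁻¹' {i} : Set (M T)) ≃ ({a : A // inS T a ∧ degA a = i} ⊕ Unit) where
  toFun m :=
    if h : inS T (kbar T m.1) then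
      Sum.inl ⟨kbar T m.1, h, by rw [degA_kbar]; exact m.2⟩
    else Sum.inr ()
  invFun x :=
    match x with
    | Sum.inl a => ⟨(a.1 : M T), by simp [a.2.2]⟩
    | Sum.inr _ => ⟨(zv i : M T), by simp⟩
  left_inv := by
    rintro ⟨m, hm⟩
    by_cases h : inS T (kbar T m)
    · simp only [dif_pos h]
      exact Subtype.ext (coe_kbar T m)
    · simp only [dif_neg h]
      apply Subtype.ext
      show ((zv i : A) : M T) = m
      have h1 : kbar T m = zv i := by
        induction m using AddCon.induction_on with
        | H a =>
          rw [kbar_coe] at h ⊢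
          unfold kap at h ⊢
          by_cases ha : inS T a
          · rw [if_pos ha] at h; exact absurd ha h
          · rw [if_neg ha]
            have hd : degA a = i := by simpa using hm
            rw [hd]
      rw [← h1]
      exact coe_kbar T m
  right_inv := by
    rintro (⟨a, ha, hd⟩ | x)
    · have h1 : kbar T ((a : A) : M T) = a := by
        rw [kbar_coe]; unfold kap; rw [if_pos ha]
      simp only [h1, dif_pos ha]
    · have h1 : kbar T ((zv i : A) : M T) = zv i := by
        rw [kbar_coe]; unfold kap
        rw [if_neg (zv_not_inS T (by omega)), degA_zv]
      have h2 : ¬ inS T (zv i) := zv_not_inS T (by omega)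
      simp only [h1, dif_neg h2]

/-- box Finset for finiteness at every degree -/
def Fcal (i : ℕ) : Finset A :=
  (Fintype.piFinset fun _ : Fin 7 => Finset.range (i+1)).filter
    (fun a => inS T a ∧ degA a = i)

lemma mem_Fcal {i : ℕ} {a : A} : a ∈ Fcal T i ↔ inS T a ∧ degA a = i := by
  unfold Fcal
  rw [Finset.mem_filter]
  constructor
  · exact fun h => h.2
  · intro h
    refine ⟨?_, h⟩
    rw [Fintype.mem_piFinset]
    intro j
    rw [Finset.mem_range]
    have : a j ≤ degA a := Finset.single_le_sum (f := fun k => a k)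
      (fun _ _ => Nat.zero_le _) (Finset.mem_univ j)
    omega

noncomputable instance fintypeS (i : ℕ) : Fintype {a : A // inS T a ∧ degA a = i} :=
  Fintype.subtype (Fcal T i) (fun _ => mem_Fcal T)

noncomputable def fiber0Equiv : (⇑(degM T) ⁻¹' {0} : Set (M T)) ≃ Unit where
  toFun _ := ()
  invFun _ := ⟨(0 : M T), by simp⟩
  left_inv := by
    rintro ⟨m, hm⟩
    exact (Subtype.ext (degM_eq_zero T (by simpa using hm))).symm
  right_inv _ := rfl

noncomputable instance fintypeFiber (i : ℕ) :
    Fintype (⇑(degM T) ⁻¹' {i} : Set (M T)) := by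
  cases i with
  | zero => exact Fintype.ofEquiv Unit (fiber0Equiv T).symm
  | succ n => exact Fintype.ofEquiv _ (fiberEquiv T (n+1) (by omega)).symm

lemma card_fiber {i : ℕ} (hT : 3 ≤ T) (hi : N0 T ≤ i) :
    Fintype.card (⇑(degM T) ⁻¹' {i} : Set (M T)) = T * i^2 := by
  have h1 : 1 ≤ i := by unfold N0 at hi; omega
  rw [Fintype.card_congr (fiberEquiv T i h1), Fintype.card_sum, Fintype.card_unit]
  have h2 : Fintype.card {a : A // inS T a ∧ degA a = i} = (SFin T i).card :=
    Fintype.card_of_subtype (SFin T i) (fun _ => mem_SFin T hT hi)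
  rw [h2]
  exact card_SFin T hT hi

/-- the graded pieces -/
noncomputable abbrev Asub : ℕ → Submodule ℚ (AddMonoidAlgebra ℚ (M T)) :=
  AddMonoidAlgebra.gradeBy ℚ ⇑(degM T)

noncomputable instance : GradedAlgebra (Asub T) :=
  AddMonoidAlgebra.gradeBy.gradedAlgebra (degM T)

lemma Asub_eq_supported (i : ℕ) :
    Asub T i = AddMonoidAlgebra.supported ℚ ℚ (⇑(degM T) ⁻¹' {i}) := by
  ext a
  rw [AddMonoidAlgebra.mem_gradeBy_iff, AddMonoidAlgebra.mem_supported]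

noncomputable def gradeEquiv (i : ℕ) :
    (Asub T i) ≃ₗ[ℚ] ((⇑(degM T) ⁻¹' {i} : Set (M T)) → ℚ) :=
  ((LinearEquiv.ofEq _ _ (Asub_eq_supported T i)).trans
    (AddMonoidAlgebra.supportedEquivFinsupp _)).trans
    (Finsupp.linearEquivFunOnFinite ℚ ℚ _)

instance finDimAsub (i : ℕ) : FiniteDimensional ℚ (Asub T i) :=
  Module.Finite.equiv (gradeEquiv T i).symm

lemma finrank_Asub (i : ℕ) :
    Module.finrank ℚ (Asub T i)
      = Fintype.card (⇑(degM T) ⁻¹' {i} : Set (M T)) := by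
  rw [LinearEquiv.finrank_eq (gradeEquiv T i), Module.finrank_fintype_fun_eq_card]

/-- generation: splitting off a degree-one element -/
lemma exists_split {n : ℕ} : ∀ (m : M T), degM T m = n + 1 →
    ∃ (g w : M T), degM T g = 1 ∧ degM T w = n ∧ m = g + w := by
  intro m
  induction m using AddCon.induction_on with
  | H a =>
    intro h
    have ha : degA a = n + 1 := h
    have hj : ∃ j, 0 < a j := by
      by_contra hc
      push_neg at hc
      have h0 : a = 0 := funext fun j => Nat.le_zero.mp (hc j)
      rw [h0] at ha
      simp [degA] at ha
    obtain ⟨j, hj⟩ := hj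
    set b : A := Function.update a j (a j - 1) with hb
    have hab : a = Pi.single j 1 + b := by
      funext k
      by_cases hk : k = j
      · subst hk
        simp [hb, Function.update_self, Pi.single_eq_same]
        omega
      · simp [hb, Function.update_of_ne hk, Pi.single_eq_of_ne hk]
    have hd1 : degA (Pi.single j (1:ℕ)) = 1 := by
      unfold degA
      rw [Finset.sum_pi_single']
      simp
    have hdb : degA b = n := by
      have := degA_add (Pi.single j 1) b
      rw [← hab, ha, hd1] at this
      omega
    refine ⟨(Pi.single j 1 : A), (b : A), by rw [degM_coe]; exact hd1,
      by rw [degM_coe]; exact hdb, ?_⟩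
    rw [hab]
    rfl

lemma single_one_mem_adjoin : ∀ (n : ℕ) (m : M T), degM T m = n →
    (AddMonoidAlgebra.single m (1:ℚ) : AddMonoidAlgebra ℚ (M T))
      ∈ Algebra.adjoin ℚ ((Asub T 1 : Submodule ℚ _) : Set (AddMonoidAlgebra ℚ (M T)))
  | 0, m, h => by
    have h0 : m = 0 := degM_eq_zero T h
    rw [h0, ← AddMonoidAlgebra.one_def]
    exact one_mem _
  | (n+1), m, h => by
    obtain ⟨g, w, hg, hw, rfl⟩ := exists_split T m h
    have hmul : (AddMonoidAlgebra.single (g + w) (1:ℚ) : AddMonoidAlgebra ℚ (M T))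
        = AddMonoidAlgebra.single g 1 * AddMonoidAlgebra.single w 1 := by
      rw [AddMonoidAlgebra.single_mul_single, one_mul]
    rw [hmul]
    refine mul_mem (Algebra.subset_adjoin ?_) (single_one_mem_adjoin n w hw)
    show AddMonoidAlgebra.single g (1:ℚ) ∈ Asub T 1
    have := AddMonoidAlgebra.single_mem_gradeBy (R := ℚ) (⇑(degM T)) g (1:ℚ)
    rwa [hg] at this

lemma adjoin_eq_top :
    Algebra.adjoin ℚ ((Asub T 1 : Submodule ℚ _) : Set (AddMonoidAlgebra ℚ (M T))) = ⊤ := by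
  rw [eq_top_iff]
  rintro x -
  induction x using AddMonoidAlgebra.induction with
  | zero => exact zero_mem _
  | single_add m b f _ hb ih =>
    refine add_mem ?_ ih
    have key := Subalgebra.smul_mem (Algebra.adjoin ℚ ((Asub T 1 : Submodule ℚ _) :
        Set (AddMonoidAlgebra ℚ (M T)))) (single_one_mem_adjoin T (degM T m) m rfl) b
    have hsm : b • (AddMonoidAlgebra.single m (1:ℚ)) = AddMonoidAlgebra.single m b := by
      rw [AddMonoidAlgebra.smul_single', mul_one]
    rwa [hsm] at key

end Alg

end SignPat

theorem sign_patterns_stmt5 (t : ℤ) (ht : 3 ≤ t) :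
    IsHilbertPolynomial (Polynomial.C (t : ℚ) * Polynomial.X ^ 2) := by
  set T : ℕ := t.toNat with hTdef
  have hT : 3 ≤ T := by omega
  have hcast : ((T : ℚ)) = (t : ℚ) := by
    have h1 : ((T : ℤ)) = t := Int.toNat_of_nonneg (by omega)
    exact_mod_cast congrArg (fun z : ℤ => (z : ℚ)) h1
  refine ⟨ℚ, AddMonoidAlgebra ℚ (SignPat.M T), inferInstance, inferInstance, inferInstance,
    SignPat.Asub T, inferInstance, fun i => inferInstance, SignPat.adjoin_eq_top T,
    SignPat.N0 T, ?_⟩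
  intro i hi
  rw [SignPat.finrank_Asub, SignPat.card_fiber T hT hi]
  rw [Polynomial.eval_mul, Polynomial.eval_C, Polynomial.eval_pow, Polynomial.eval_X]
  push_cast
  rw [hcast]
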